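/- Let V be a valuation ring and f : X → Spec(V) a morphism of schemes such that the pair m ≤ (0) lifts to a pair x ≤ x' in X. Then there exists a valuation ring W and a morphism Spec(W) → X such that the composition Spec(W) → X → Spec(V) is surjective. -/

import Mathlib

open AlgebraicGeometry CategoryTheory Topology

universe u

/-- An injective local homomorphism of valuation rings induces a surjection on prime
spectra. -/
theorem comap_surjective_aux {V W : Type*} [CommRing V] [IsDomain V] [ValuationRing V]
    [CommRing W] [IsDomain W] [ValuationRing W] (φ : V →+* W) [IsLocalHom φ]
    (hinj : Function.Injective φ) :
    Function.Surjective (PrimeSpectrum.comap φ) := by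
  rintro ⟨p, hp⟩
  let q : Ideal W :=
  { carrier := {a : W | ∀ s : V, s ∉ p → ¬ a ∣ φ s}
    zero_mem' := by
      intro s hs h0
      have : φ s = 0 := zero_dvd_iff.mp h0
      have hs0 : s = 0 := hinj (by simpa using this)
      exact hs (hs0 ▸ p.zero_mem)
    add_mem' := by
      intro a b ha hb s hs hdvd
      rcases ValuationRing.dvd_total a b with hab | hba
      · exact ha s hs ((dvd_add (dvd_refl a) hab).trans hdvd)
      · exact hb s hs ((dvd_add hba (dvd_refl b)).trans hdvd)
    smul_mem' := by
      intro c a ha s hs hdvd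
      exact ha s hs ((dvd_mul_left a c).trans (by simpa using hdvd)) }
  have hq : q.IsPrime := by
    constructor
    · intro htop
      have h1 : (1 : W) ∈ q := htop ▸ Submodule.mem_top
      exact h1 1 (Ideal.ne_top_iff_one p |>.mp hp.ne_top) (by simp)
    · intro a b hab
      by_contra hcon
      push_neg at hcon
      obtain ⟨ha, hb⟩ := hcon
      simp only [q, Submodule.mem_mk, AddSubmonoid.mem_mk, AddSubsemigroup.mem_mk,
        Set.mem_setOf_eq, not_forall] at ha hb
      obtain ⟨s, hs, hsd⟩ := ha
      obtain ⟨t, ht, htd⟩ := hb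
      simp only [not_not] at hsd htd
      have hst : s * t ∉ p := fun h => (hp.mem_or_mem h).elim hs ht
      exact hab (s * t) hst (by rw [map_mul]; exact mul_dvd_mul hsd htd)
  refine ⟨⟨q, hq⟩, PrimeSpectrum.ext ?_⟩
  show Ideal.comap φ q = p
  ext a
  simp only [Ideal.mem_comap]
  constructor
  · intro haq
    by_contra hap
    exact haq a hap (dvd_refl _)
  · intro hap s hs hdvd
    rcases ValuationRing.dvd_total a s with has | hsa
    · obtain ⟨c, rfl⟩ := has
      exact hs (p.mul_mem_right c hap)
    · obtain ⟨u, hu⟩ := hsa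
      obtain ⟨w, hw⟩ := hdvd
      have hs0 : φ s ≠ 0 := fun h => hs (by
        have : s = 0 := hinj (by simpa using h)
        exact this ▸ p.zero_mem)
      have h1 : φ u * w = 1 := by
        have : φ s * 1 = φ s * (φ u * w) := by
          rw [mul_one, ← mul_assoc, ← map_mul, ← hu, ← hw]
        exact (mul_left_cancel₀ hs0 this).symm
      have huu : IsUnit u := IsLocalHom.map_nonunit u (IsUnit.of_mul_eq_one _ h1)
      obtain ⟨v, rfl⟩ := huu
      have : s = a * (↑v⁻¹ : Vˣ) := by
        rw [hu, Units.mul_inv_cancel_right]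
      exact hs (this ▸ p.mul_mem_right _ hap)

open IsLocalRing Scheme in
/-- Let `V` be a valuation ring and `f : X ⟶ Spec V` such that the pair `m ≤ (0)` lifts to
a specialization pair `x ≤ x'` in `X`.  Then there is a valuation ring `W` and a morphism
`Spec W ⟶ X` whose composition with `f` is surjective. -/
theorem stmt9 {V : Type u} [CommRing V] [IsDomain V] [ValuationRing V]
    {X : Scheme.{u}} (f : X ⟶ Spec (CommRingCat.of V))
    (x x' : X) (hspec : x' ⤳ x)
    (hx : f.base x = IsLocalRing.closedPoint V)
    (hx' : f.base x' = (⟨⊥, Ideal.bot_prime⟩ : PrimeSpectrum V)) :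
    ∃ (W : Type u) (_ : CommRing W) (_ : IsDomain W) (_ : ValuationRing W)
      (g : Spec (CommRingCat.of W) ⟶ X),
      Function.Surjective (g ≫ f).base := by
  -- the map from the stalk at `x` to the residue field at `x'`
  let ψ : X.presheaf.stalk x ⟶ X.residueField x' :=
    X.presheaf.stalkSpecializes hspec ≫ X.residue x'
  -- a valuation ring of `κ(x')` dominating the image of the stalk at `x`
  obtain ⟨A, hA, hA_local⟩ := exists_factor_valuationRing ψ.hom
  let h : X.presheaf.stalk x ⟶ CommRingCat.of A :=
    CommRingCat.ofHom (ψ.hom.codRestrict A.toSubring hA)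
  haveI : IsLocalHom h.hom := hA_local
  haveI : IsLocalRing ↑(CommRingCat.of ↥A) := inferInstanceAs (IsLocalRing ↥A)
  haveI : IsLocalRing ↑(CommRingCat.of V) := inferInstanceAs (IsLocalRing V)
  haveI : IsDomain ↑(CommRingCat.of V) := inferInstanceAs (IsDomain V)
  haveI : ValuationRing ↑(CommRingCat.of V) := inferInstanceAs (ValuationRing V)
  haveI : IsDomain ↑(CommRingCat.of ↥A) := inferInstanceAs (IsDomain ↥A)
  haveI : ValuationRing ↑(CommRingCat.of ↥A) := inferInstanceAs (ValuationRing ↥A)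
  let g : Spec (CommRingCat.of A) ⟶ X := Spec.map h ≫ X.fromSpecStalk x
  -- the closed point of `Spec A` maps to the closed point of `Spec V`
  have hc : (g ≫ f).base (closedPoint ↑(CommRingCat.of ↥A)) =
      closedPoint ↑(CommRingCat.of V) := by
    show f.base ((X.fromSpecStalk x).base
      ((Spec.map h).base (closedPoint ↑(CommRingCat.of ↥A)))) = _
    rw [Spec_closedPoint,
      fromSpecStalk_closedPoint]
    exact hx
  -- the induced ring map `V ⟶ A`
  let Φ : CommRingCat.of V ⟶ CommRingCat.of A :=
    (stalkClosedPointIso (CommRingCat.of V)).inv ≫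
      (Spec (CommRingCat.of V)).presheaf.stalkSpecializes (specializes_of_eq hc) ≫
        Scheme.stalkClosedPointTo (g ≫ f)
  have hSpec : Spec.map Φ = g ≫ f := by
    rw [Spec.map_comp, Spec.map_comp, Spec_stalkClosedPointIso, Category.assoc]
    rw [SpecMap_stalkSpecializes_fromSpecStalk (X := Spec (CommRingCat.of V)) (specializes_of_eq hc)]
    rw [Spec_stalkClosedPointTo_fromSpecStalk]
  -- the generic point of `Spec A` maps to `x'`
  have hgen : g.base (⟨⊥, Ideal.bot_prime⟩ : PrimeSpectrum A) = x' := by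
    have key : (Spec.map h).base (⟨⊥, Ideal.bot_prime⟩ : PrimeSpectrum A) =
        (Spec.map (X.presheaf.stalkSpecializes hspec)).base
          (closedPoint (X.presheaf.stalk x')) := by
      refine PrimeSpectrum.ext ?_
      show Ideal.comap h.hom ⊥ = Ideal.comap (X.presheaf.stalkSpecializes hspec).hom
        (maximalIdeal (X.presheaf.stalk x'))
      rw [← IsLocalRing.ker_residue (R := ↑(X.presheaf.stalk x'))]
      ext a
      simp only [Ideal.mem_comap, Ideal.mem_bot, RingHom.mem_ker]
      constructor
      · intro ha
        have h2 := congrArg Subtype.val ha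
        exact h2
      · intro ha
        exact Subtype.ext ha
    erw [Scheme.Hom.comp_apply, key, ← Scheme.Hom.comp_apply,
      SpecMap_stalkSpecializes_fromSpecStalk, fromSpecStalk_closedPoint]
  -- hence `Φ` is injective
  have hker : Function.Injective Φ.hom := by
    rw [RingHom.injective_iff_ker_eq_bot]
    have : (Spec.map Φ).base (⟨⊥, Ideal.bot_prime⟩ : PrimeSpectrum A) =
        (⟨⊥, Ideal.bot_prime⟩ : PrimeSpectrum V) := by
      rw [hSpec]; erw [Scheme.Hom.comp_apply, hgen, hx']
    have := congrArg PrimeSpectrum.asIdeal this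
    change Ideal.comap Φ.hom ⊥ = ⊥ at this
    simpa [RingHom.ker_eq_comap_bot] using this
  haveI h0 : IsLocalHom
      ((Spec (CommRingCat.of V)).presheaf.stalkSpecializes (specializes_of_eq hc)).hom :=
    isLocalHom_of_iso
      ((Spec (CommRingCat.of V)).presheaf.stalkCongr ((Inseparable.of_eq hc).symm))
  haveI h1 : IsLocalHom
      ((Spec (CommRingCat.of V)).presheaf.stalkSpecializes (specializes_of_eq hc) ≫
        Scheme.stalkClosedPointTo (g ≫ f)).hom := CommRingCat.isLocalHom_comp _ _
  haveI h2 : IsLocalHom ((stalkClosedPointIso (CommRingCat.of V)).inv).hom :=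
    isLocalHom_of_iso (stalkClosedPointIso (CommRingCat.of V)).symm
  haveI : IsLocalHom Φ.hom := CommRingCat.isLocalHom_comp _ _
  refine ⟨A, inferInstance, inferInstance, inferInstance, g, ?_⟩
  rw [← hSpec]
  exact comap_surjective_aux Φ.hom hker
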